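/- Let B(t,x;{123,132}) = Σ_{n≥0} B_n(t;{123,132}) x^n be the formal power series in x, with coefficients in the polynomial ring ℤ[t], where B_n(t;{123,132}) = Σ_{π ∈ S_n({123,132})} t^{bdes(π)}. Then (1 − 2x + (1−t)x² + t(1−t)x³) · B(t,x;{123,132}) = 1 − x + (1−t)x² − (1−t)²x³ as an identity of formal power series in (ℤ[t])[[x]]. -/

import Mathlib

open scoped Classical

/-- A permutation `π` of `Fin n` contains the pattern `σ` (a permutation of `Fin m`)
if some subsequence of the one-line notation of `π` standardizes to `σ`. -/
def Contains {n m : ℕ} (π : Equiv.Perm (Fin n)) (σ : Equiv.Perm (Fin m)) : Prop :=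
  ∃ f : Fin m → Fin n, StrictMono f ∧ ∀ a b : Fin m, σ a < σ b ↔ π (f a) < π (f b)

/-- `π` avoids the pattern `σ`. -/
def Avoids {n m : ℕ} (π : Equiv.Perm (Fin n)) (σ : Equiv.Perm (Fin m)) : Prop :=
  ¬ Contains π σ

/-- The pattern 123 (identity, in 0-indexed one-line notation `[0,1,2]`). -/
def perm123 : Equiv.Perm (Fin 3) := 1

/-- The pattern 132 (0-indexed one-line notation `[0,2,1]`). -/
def perm132 : Equiv.Perm (Fin 3) := ⟨![0, 2, 1], ![0, 2, 1], by decide, by decide⟩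

/-- The pattern 213 (0-indexed one-line notation `[1,0,2]`). -/
def perm213 : Equiv.Perm (Fin 3) := ⟨![1, 0, 2], ![1, 0, 2], by decide, by decide⟩

/-- The pattern 231 (0-indexed one-line notation `[1,2,0]`). -/
def perm231 : Equiv.Perm (Fin 3) := ⟨![1, 2, 0], ![2, 0, 1], by decide, by decide⟩

/-- The pattern 312 (0-indexed one-line notation `[2,0,1]`). -/
def perm312 : Equiv.Perm (Fin 3) := ⟨![2, 0, 1], ![1, 2, 0], by decide, by decide⟩

/-- The pattern 321 (0-indexed one-line notation `[2,1,0]`). -/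
def perm321 : Equiv.Perm (Fin 3) := ⟨![2, 1, 0], ![2, 1, 0], by decide, by decide⟩

/-- The number of big descents of `π`: 0-indexed positions `k` with `π k > π (k+1) + 1`. -/
def bdes {n : ℕ} (π : Equiv.Perm (Fin n)) : ℕ :=
  ((Finset.range n).filter fun k =>
    ∃ hk : k + 1 < n, (π ⟨k + 1, hk⟩ : ℕ) + 1 < (π ⟨k, Nat.lt_of_succ_lt hk⟩ : ℕ)).card

/-- The generating function `B(t,x;{123,132}) = Σ_n Σ_{π ∈ S_n({123,132})} t^{bdes π} x^n`,
as a formal power series in `x` with coefficients in `ℤ[t]`. -/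
noncomputable def B123132 : PowerSeries (Polynomial ℤ) :=
  PowerSeries.mk fun n =>
    ∑ π ∈ Finset.univ.filter
      (fun π : Equiv.Perm (Fin n) => Avoids π perm123 ∧ Avoids π perm132),
      Polynomial.X ^ bdes π


/-! ### Auxiliary development -/

namespace Bd
open Finset Polynomial
def Av {n : ℕ} (π : Equiv.Perm (Fin n)) : Prop := Avoids π perm123 ∧ Avoids π perm132

lemma strictMono_trip {N : ℕ} (a b c : Fin N) (h1 : a < b) (h2 : b < c) :
    StrictMono ![a, b, c] := by
  intro i j hij
  fin_cases i <;> fin_cases j <;> simp_all <;> omega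

lemma first_large {n : ℕ} (π : Equiv.Perm (Fin (n+2))) (h : Av π) : n ≤ (π 0 : ℕ) := by
  by_contra hlt
  push_neg at hlt
  set i := π.symm (Fin.last (n+1)) with hi
  set j := π.symm ⟨n, by omega⟩ with hj
  have hπi : π i = Fin.last (n+1) := π.apply_symm_apply _
  have hπj : π j = ⟨n, by omega⟩ := π.apply_symm_apply _
  have hi0 : (0 : Fin (n+2)) < i := by
    refine Fin.pos_iff_ne_zero.2 fun h0 => ?_
    rw [h0] at hπi
    have := congrArg Fin.val hπi
    simp [Fin.last] at this
    omega
  have hj0 : (0 : Fin (n+2)) < j := by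
    refine Fin.pos_iff_ne_zero.2 fun h0 => ?_
    rw [h0] at hπj
    have := congrArg Fin.val hπj
    simp at this
    omega
  have hij : i ≠ j := by
    intro hh; rw [hh, hπj] at hπi; exact absurd (congrArg Fin.val hπi) (by simp [Fin.last])
  have hvi : (π i : ℕ) = n + 1 := by rw [hπi]; rfl
  have hvj : (π j : ℕ) = n := by rw [hπj]
  rcases lt_or_gt_of_ne hij with hlt' | hlt'
  · -- i < j : values (π 0, n+1, n) : pattern 132
    refine h.2 ⟨![0, i, j], strictMono_trip _ _ _ hi0 hlt', ?_⟩
    intro a b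
    fin_cases a <;> fin_cases b <;>
      simp [perm132, Fin.lt_def, hvi, hvj] <;> omega
  · -- j < i : values (π 0, n, n+1) : pattern 123
    refine h.1 ⟨![0, j, i], strictMono_trip _ _ _ hj0 hlt', ?_⟩
    intro a b
    fin_cases a <;> fin_cases b <;>
      simp [perm123, Fin.lt_def, hvi, hvj] <;> omega

noncomputable def A (n : ℕ) : Polynomial ℤ :=
  ∑ π ∈ Finset.univ.filter (fun π : Equiv.Perm (Fin n) => Av π), X ^ bdes π
noncomputable def c (n : ℕ) : Polynomial ℤ :=
  ∑ π ∈ Finset.univ.filter (fun π : Equiv.Perm (Fin (n+1)) => Av π ∧ (π 0 : ℕ) = n), X ^ bdes π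
noncomputable def d (n : ℕ) : Polynomial ℤ :=
  ∑ π ∈ Finset.univ.filter (fun π : Equiv.Perm (Fin (n+2)) => Av π ∧ (π 0 : ℕ) = n), X ^ bdes π

noncomputable def e (n : ℕ) : Polynomial ℤ :=
  ∑ π ∈ Finset.univ.filter
    (fun π : Equiv.Perm (Fin (n+2)) => Av π ∧ (π 0 : ℕ) = n+1 ∧ (π 1 : ℕ) = n), X ^ bdes π

lemma av_small {n : ℕ} (hn : n < 3) (π : Equiv.Perm (Fin n)) : Av π := by
  constructor <;> rintro ⟨f, hf, -⟩ <;>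
  · have := Fintype.card_le_of_injective f hf.injective
    simp at this; omega

lemma A_eq (n : ℕ) : A (n+2) = c (n+1) + d n := by
  unfold A c d
  rw [← Finset.sum_filter_add_sum_filter_not
    (Finset.univ.filter (fun π : Equiv.Perm (Fin (n+2)) => Av π)) (fun π => (π 0 : ℕ) = n+1),
    Finset.filter_filter, Finset.filter_filter]
  congr 1
  apply Finset.sum_congr _ (fun _ _ => rfl)
  apply Finset.filter_congr
  intro π _
  constructor
  · rintro ⟨hav, hne⟩
    refine ⟨hav, ?_⟩
    have h1 := first_large π hav
    have h2 := (π 0).isLt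
    omega
  · rintro ⟨hav, heq⟩
    exact ⟨hav, by omega⟩

lemma A_small (n : ℕ) (hn : n < 3) (hb : ∀ π : Equiv.Perm (Fin n), bdes π = 0) :
    A n = (Nat.factorial n : Polynomial ℤ) := by
  unfold A
  rw [Finset.filter_true_of_mem (fun π _ => av_small hn π),
    Finset.sum_congr rfl (fun π _ => by rw [hb π, pow_zero])]
  simp [Finset.card_univ, Fintype.card_perm]

lemma A0 : A 0 = 1 := by rw [A_small 0 (by norm_num) (by decide)]; norm_num
lemma A1 : A 1 = 1 := by rw [A_small 1 (by norm_num) (by decide)]; norm_num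
lemma A2 : A 2 = 2 := by rw [A_small 2 (by norm_num) (by decide)]; norm_num

lemma c0 : c 0 = 1 := by
  unfold c
  rw [Finset.filter_true_of_mem (fun π _ => ⟨av_small (by norm_num) π, by omega⟩)]
  rw [Finset.sum_congr rfl (fun π _ => by rw [show bdes π = 0 by revert π; decide, pow_zero])]
  simp [Finset.card_univ]

lemma d0 : d 0 = 1 := by
  unfold d
  have hfil : Finset.univ.filter (fun π : Equiv.Perm (Fin 2) => Av π ∧ (π 0 : ℕ) = 0) = {1} := by
    ext π
    simp only [Finset.mem_filter, Finset.mem_univ, true_and, Finset.mem_singleton]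
    constructor
    · rintro ⟨-, h0⟩
      revert h0; revert π; decide
    · rintro rfl
      exact ⟨av_small (by norm_num) _, by decide⟩
  rw [hfil]
  rw [Finset.sum_singleton, show bdes (1 : Equiv.Perm (Fin 2)) = 0 by decide, pow_zero]

lemma bdes_eq_sum {N : ℕ} (π : Equiv.Perm (Fin N)) :
    bdes π = ∑ k ∈ Finset.range N,
      if h : k + 1 < N then
        (if (π ⟨k+1, h⟩ : ℕ) + 1 < (π ⟨k, Nat.lt_of_succ_lt h⟩ : ℕ) then 1 else 0)
      else 0 := by
  unfold bdes
  rw [Finset.card_filter]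
  refine Finset.sum_congr rfl fun k _ => ?_
  by_cases h : k + 1 < N
  · rw [dif_pos h]
    by_cases h2 : (π ⟨k+1, h⟩ : ℕ) + 1 < (π ⟨k, Nat.lt_of_succ_lt h⟩ : ℕ)
    · rw [if_pos h2, if_pos ⟨h, h2⟩]
    · rw [if_neg h2, if_neg]
      rintro ⟨h', hh⟩
      exact h2 hh
  · rw [dif_neg h, if_neg]
    rintro ⟨h', -⟩
    exact h h'

noncomputable def consPerm {m : ℕ} (π : Equiv.Perm (Fin m)) (cv : Fin (m+1))
    (v : Fin m → Fin (m+1)) (hv : Function.Injective v) (hcv : ∀ j, v j ≠ cv) :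
    Equiv.Perm (Fin (m+1)) :=
  Equiv.ofBijective (Fin.cons cv (v ∘ π))
    (Finite.injective_iff_bijective.1 (by
      intro a b hab
      induction a using Fin.cases with
      | zero =>
        induction b using Fin.cases with
        | zero => rfl
        | succ j =>
          rw [Fin.cons_zero, Fin.cons_succ] at hab
          exact absurd hab.symm (hcv _)
      | succ i =>
        induction b using Fin.cases with
        | zero =>
          rw [Fin.cons_zero, Fin.cons_succ] at hab
          exact absurd hab (hcv _)
        | succ j =>
          rw [Fin.cons_succ, Fin.cons_succ] at hab
          exact congrArg Fin.succ (π.injective (hv hab))))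

@[simp] lemma consPerm_zero {m : ℕ} (π : Equiv.Perm (Fin m)) (cv v hv hcv) :
    consPerm π cv v hv hcv 0 = cv := by
  simp [consPerm]

@[simp] lemma consPerm_succ {m : ℕ} (π : Equiv.Perm (Fin m)) (cv v hv hcv) (j : Fin m) :
    consPerm π cv v hv hcv j.succ = v (π j) := by
  simp [consPerm]

lemma contains_cons_iff {m : ℕ} (π : Equiv.Perm (Fin m)) (cv v hv hcv)
    (hmono : StrictMono v)
    (hone : ∀ x y : Fin m, cv < v x → cv < v y → x = y)
    (σ : Equiv.Perm (Fin 3)) (h01 : σ 0 < σ 1) (h02 : σ 0 < σ 2) :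
    Contains (consPerm π cv v hv hcv) σ ↔ Contains π σ := by
  set F := consPerm π cv v hv hcv with hF
  constructor
  · rintro ⟨f, hf, hspec⟩
    by_cases h0 : f 0 = 0
    · exfalso
      have h1 : f 1 ≠ 0 := by
        intro hh
        have := hf (show (0:Fin 3) < 1 by decide)
        rw [h0, hh] at this; exact lt_irrefl _ this
      have h2 : f 2 ≠ 0 := by
        intro hh
        have := hf (show (0:Fin 3) < 2 by decide)
        rw [h0, hh] at this; exact lt_irrefl _ this
      have e1 : F (f 1) = v (π ((f 1).pred h1)) := by
        conv_lhs => rw [← Fin.succ_pred (f 1) h1]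
        rw [hF, consPerm_succ]
      have e2 : F (f 2) = v (π ((f 2).pred h2)) := by
        conv_lhs => rw [← Fin.succ_pred (f 2) h2]
        rw [hF, consPerm_succ]
      have hc1 : cv < v (π ((f 1).pred h1)) := by
        rw [← e1]
        have := (hspec 0 1).1 h01
        rwa [h0, hF, consPerm_zero] at this
      have hc2 : cv < v (π ((f 2).pred h2)) := by
        rw [← e2]
        have := (hspec 0 2).1 h02
        rwa [h0, hF, consPerm_zero] at this
      have heq : (f 1).pred h1 = (f 2).pred h2 := π.injective (hone _ _ hc1 hc2)
      have hfeq : f 1 = f 2 := by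
        have := congrArg Fin.succ heq
        rwa [Fin.succ_pred, Fin.succ_pred] at this
      have hlt := hf (show (1:Fin 3) < 2 by decide)
      rw [hfeq] at hlt; exact lt_irrefl _ hlt
    · have hne : ∀ i : Fin 3, f i ≠ 0 := by
        intro i hh
        rcases eq_or_ne i 0 with rfl | hi
        · exact h0 hh
        · have hlt : f 0 < f i := hf (Fin.pos_iff_ne_zero.2 hi)
          rw [hh] at hlt
          exact Fin.not_lt_zero _ hlt
      have e : ∀ i, F (f i) = v (π ((f i).pred (hne i))) := fun i => by
        conv_lhs => rw [← Fin.succ_pred (f i) (hne i)]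
        rw [hF, consPerm_succ]
      refine ⟨fun i => (f i).pred (hne i), fun a b hab => ?_, fun a b => ?_⟩
      · rw [Fin.pred_lt_pred_iff]
        exact hf hab
      · rw [hspec a b, e a, e b]
        exact hmono.lt_iff_lt
  · rintro ⟨f, hf, hspec⟩
    refine ⟨fun i => (f i).succ, fun a b hab => Fin.succ_lt_succ_iff.2 (hf hab), ?_⟩
    intro a b
    rw [hF, consPerm_succ, consPerm_succ]
    rw [hspec a b]
    exact (hmono.lt_iff_lt).symm

lemma bdes_cons {m : ℕ} (π : Equiv.Perm (Fin (m+1))) (cv v hv hcv) :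
    bdes (consPerm π cv v hv hcv) =
      (if (v (π 0) : ℕ) + 1 < (cv : ℕ) then 1 else 0) +
      ∑ k ∈ Finset.range (m+1),
        (if h : k + 1 < m+1 then
          (if (v (π ⟨k+1, h⟩) : ℕ) + 1 < (v (π ⟨k, Nat.lt_of_succ_lt h⟩) : ℕ) then 1 else 0)
        else 0) := by
  rw [bdes_eq_sum, Finset.sum_range_succ', add_comm]
  congr 1
  · refine Finset.sum_congr rfl fun k hk => ?_
    by_cases h : k + 1 < m + 1
    · rw [dif_pos (by omega : k+1+1 < m+1+1), dif_pos h]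
      have e1 : (consPerm π cv v hv hcv) ⟨k+1+1, by omega⟩ = v (π ⟨k+1, h⟩) := by
        show (consPerm π cv v hv hcv) (Fin.succ ⟨k+1, h⟩) = _
        rw [consPerm_succ]
      have e2 : (consPerm π cv v hv hcv) ⟨k+1, by omega⟩ = v (π ⟨k, Nat.lt_of_succ_lt h⟩) := by
        show (consPerm π cv v hv hcv) (Fin.succ ⟨k, Nat.lt_of_succ_lt h⟩) = _
        rw [consPerm_succ]
      rw [e1, e2]
    · rw [dif_neg (by omega), dif_neg h]

/-! ### The prepend-max map -/

noncomputable def pmax {m : ℕ} (π : Equiv.Perm (Fin m)) : Equiv.Perm (Fin (m+1)) :=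
  consPerm π (Fin.last m) Fin.castSucc (Fin.castSucc_injective m)
    (fun j => (Fin.castSucc_lt_last j).ne)

@[simp] lemma pmax_zero {m : ℕ} (π : Equiv.Perm (Fin m)) : pmax π 0 = Fin.last m :=
  consPerm_zero ..

@[simp] lemma pmax_succ {m : ℕ} (π : Equiv.Perm (Fin m)) (j : Fin m) :
    pmax π j.succ = (π j).castSucc :=
  consPerm_succ ..

lemma av_pmax_iff {m : ℕ} (π : Equiv.Perm (Fin m)) : Av (pmax π) ↔ Av π := by
  have hone : ∀ x y : Fin m, Fin.last m < Fin.castSucc x → Fin.last m < Fin.castSucc y → x = y :=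
    fun x y h1 _ => absurd h1 (not_lt.2 (Fin.le_last _))
  have hmono : StrictMono (Fin.castSucc : Fin m → Fin (m+1)) :=
    fun a b h => Fin.castSucc_lt_castSucc_iff.2 h
  unfold Av Avoids pmax
  rw [contains_cons_iff π _ _ _ _ hmono hone perm123 (by decide) (by decide),
    contains_cons_iff π _ _ _ _ hmono hone perm132 (by decide) (by decide)]

lemma bdes_pmax {n : ℕ} (π : Equiv.Perm (Fin (n+1))) :
    bdes (pmax π) = bdes π + (if (π 0 : ℕ) = n then 0 else 1) := by
  have hthis := bdes_cons π (Fin.last (n+1)) Fin.castSucc (Fin.castSucc_injective (n+1))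
    (fun j => (Fin.castSucc_lt_last j).ne)
  rw [show consPerm π (Fin.last (n+1)) Fin.castSucc (Fin.castSucc_injective (n+1))
    (fun j => (Fin.castSucc_lt_last j).ne) = pmax π from rfl] at hthis
  have hB : (∑ k ∈ Finset.range (n+1),
      (if h : k + 1 < n+1 then
        (if (Fin.castSucc (π ⟨k+1, h⟩) : ℕ) + 1 < (Fin.castSucc (π ⟨k, Nat.lt_of_succ_lt h⟩) : ℕ)
          then 1 else 0)
      else 0)) = bdes π := by
    rw [bdes_eq_sum π]
    refine Finset.sum_congr rfl fun k hk => ?_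
    by_cases h : k + 1 < n + 1
    · rw [dif_pos h, dif_pos h]
      simp only [Fin.coe_castSucc]
    · rw [dif_neg h, dif_neg h]
  have hA : (if (Fin.castSucc (π 0) : ℕ) + 1 < (Fin.last (n+1) : ℕ) then 1 else 0)
      = (if (π 0 : ℕ) = n then 0 else 1) := by
    simp only [Fin.coe_castSucc, Fin.val_last]
    have hb : (π 0 : ℕ) < n + 1 := (π 0).isLt
    split_ifs <;> omega
  rw [hthis, hB, hA, Nat.add_comm]

/-! ### The second-max prepend map -/

def vmap (n : ℕ) : Fin (n+2) → Fin (n+3) :=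
  fun x => if (x : ℕ) = n+1 then Fin.last (n+2) else Fin.castSucc x

lemma vmap_val {n : ℕ} (x : Fin (n+2)) :
    (vmap n x : ℕ) = if (x : ℕ) = n+1 then n+2 else (x : ℕ) := by
  unfold vmap
  split_ifs <;> simp

lemma vmap_inj {n : ℕ} : Function.Injective (vmap n) := by
  intro x y h
  have hx := vmap_val x
  have hy := vmap_val y
  rw [h] at hx
  have hxb := x.isLt
  have hyb := y.isLt
  exact Fin.ext (by split_ifs at hx hy <;> omega)

lemma vmap_mono {n : ℕ} : StrictMono (vmap n) := by
  intro x y h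
  rw [Fin.lt_def] at h ⊢
  rw [vmap_val, vmap_val]
  have hxb := x.isLt
  have hyb := y.isLt
  split_ifs <;> omega

lemma vmap_ne {n : ℕ} (j : Fin (n+2)) : vmap n j ≠ ⟨n+1, by omega⟩ := by
  intro h
  have := congrArg Fin.val h
  rw [vmap_val] at this
  simp at this
  split_ifs at this <;> omega

noncomputable def dmap {n : ℕ} (π : Equiv.Perm (Fin (n+2))) : Equiv.Perm (Fin (n+3)) :=
  consPerm π ⟨n+1, by omega⟩ (vmap n) vmap_inj vmap_ne

@[simp] lemma dmap_zero {n : ℕ} (π : Equiv.Perm (Fin (n+2))) :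
    dmap π 0 = ⟨n+1, by omega⟩ := consPerm_zero ..

@[simp] lemma dmap_succ {n : ℕ} (π : Equiv.Perm (Fin (n+2))) (j : Fin (n+2)) :
    dmap π j.succ = vmap n (π j) := consPerm_succ ..

lemma av_dmap_iff {n : ℕ} (π : Equiv.Perm (Fin (n+2))) : Av (dmap π) ↔ Av π := by
  have hone : ∀ x y : Fin (n+2), (⟨n+1, by omega⟩ : Fin (n+3)) < vmap n x →
      (⟨n+1, by omega⟩ : Fin (n+3)) < vmap n y → x = y := by
    intro x y h1 h2
    rw [Fin.lt_def] at h1 h2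
    rw [vmap_val] at h1 h2
    have hcv : ((⟨n+1, by omega⟩ : Fin (n+3)) : ℕ) = n+1 := rfl
    rw [hcv] at h1 h2
    have hxb := x.isLt
    have hyb := y.isLt
    refine Fin.ext ?_
    split_ifs at h1 h2 <;> omega
  unfold Av Avoids dmap
  rw [contains_cons_iff π _ _ _ _ vmap_mono hone perm123 (by decide) (by decide),
    contains_cons_iff π _ _ _ _ vmap_mono hone perm132 (by decide) (by decide)]

lemma bdes_dmap {n : ℕ} (π : Equiv.Perm (Fin (n+2))) (hπ0 : n ≤ (π 0 : ℕ)) :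
    bdes (dmap π) = bdes π + ∑ k ∈ Finset.range (n+2),
      (if h : k + 1 < n+2 then
        (if (π ⟨k, Nat.lt_of_succ_lt h⟩ : ℕ) = n+1 ∧ (π ⟨k+1, h⟩ : ℕ) = n then 1 else 0)
      else 0) := by
  have := bdes_cons π ⟨n+1, by omega⟩ (vmap n) vmap_inj vmap_ne
  rw [show consPerm π ⟨n+1, by omega⟩ (vmap n) vmap_inj vmap_ne = dmap π from rfl] at this
  rw [this, bdes_eq_sum π]
  have h0 : (if (vmap n (π 0) : ℕ) + 1 < ((⟨n+1, by omega⟩ : Fin (n+3)) : ℕ) then 1 else 0) = 0 := by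
    rw [vmap_val, show ((⟨n+1, by omega⟩ : Fin (n+3)) : ℕ) = n+1 from rfl]
    have hb := (π 0).isLt
    split_ifs <;> omega
  rw [h0, zero_add, ← Finset.sum_add_distrib]
  refine Finset.sum_congr rfl fun k hk => ?_
  by_cases h : k + 1 < n + 2
  · rw [dif_pos h, dif_pos h, dif_pos h]
    have hne : π ⟨k+1, h⟩ ≠ π ⟨k, Nat.lt_of_succ_lt h⟩ := by
      intro hh
      have := π.injective hh
      have := congrArg Fin.val this
      simp at this
    have hne' : (π ⟨k+1, h⟩ : ℕ) ≠ (π ⟨k, Nat.lt_of_succ_lt h⟩ : ℕ) :=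
      fun hh => hne (Fin.ext hh)
    rw [vmap_val, vmap_val]
    have hb1 := (π ⟨k+1, h⟩).isLt
    have hb2 := (π ⟨k, Nat.lt_of_succ_lt h⟩).isLt
    split_ifs <;> omega
  · rw [dif_neg h, dif_neg h, dif_neg h]
/-- Transport along `pmax`: the avoiders of `S_{n+2}` starting with the max value
correspond to all avoiders of `S_{n+1}`, with a bdes correction. -/
lemma pmax_mem_filter {n : ℕ} (π : Equiv.Perm (Fin (n+1))) (hav : Av π) :
    Av (pmax π) ∧ ((pmax π) 0 : ℕ) = n+1 :=
  ⟨(av_pmax_iff π).2 hav, by rw [pmax_zero]; rfl⟩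

lemma pmax_inj {n : ℕ} (π π' : Equiv.Perm (Fin n)) (h : pmax π = pmax π') : π = π' := by
  ext j
  have h2 := congrArg (fun (ρ : Equiv.Perm (Fin (n+1))) => ρ j.succ) h
  simp only [pmax_succ] at h2
  exact congrArg Fin.val (Fin.castSucc_injective _ h2)

lemma pmax_surj {n : ℕ} (ρ : Equiv.Perm (Fin (n+2))) (hav : Av ρ) (h0 : (ρ 0 : ℕ) = n+1) :
    ∃ π : Equiv.Perm (Fin (n+1)), Av π ∧ pmax π = ρ := by
  have h0' : ρ 0 = Fin.last (n+1) := Fin.ext (by rw [h0]; rfl)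
  have hne : ∀ j : Fin (n+1), ρ j.succ ≠ Fin.last (n+1) := by
    intro j hh
    rw [← h0'] at hh
    exact (Fin.succ_ne_zero j) (ρ.injective hh)
  have hinj : Function.Injective (fun j : Fin (n+1) => (ρ j.succ).castPred (hne j)) := by
    intro a b hab
    have hab' : ρ a.succ = ρ b.succ := by
      have := congrArg Fin.val hab
      simp only [Fin.coe_castPred] at this
      exact Fin.ext this
    exact Fin.succ_injective _ (ρ.injective hab')
  set π0 : Equiv.Perm (Fin (n+1)) :=
    Equiv.ofBijective _ (Finite.injective_iff_bijective.1 hinj) with hπ0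
  have happ : ∀ j, π0 j = (ρ j.succ).castPred (hne j) := fun j => rfl
  have hmap : pmax π0 = ρ := by
    refine Equiv.ext fun i => ?_
    induction i using Fin.cases with
    | zero => rw [pmax_zero, h0']
    | succ j => rw [pmax_succ, happ, Fin.castSucc_castPred]
  exact ⟨π0, (av_pmax_iff π0).1 (hmap ▸ hav), hmap⟩

lemma c_key (n : ℕ) : c (n+1)
    = ∑ π ∈ Finset.univ.filter (fun π : Equiv.Perm (Fin (n+1)) => Av π),
        X ^ (bdes π + (if (π 0 : ℕ) = n then 0 else 1)) := by
  unfold c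
  refine (Finset.sum_bij (fun (π : Equiv.Perm (Fin (n+1))) (_ : π ∈ _) => pmax π)
    ?_ ?_ ?_ ?_).symm
  · intro π hπ
    rw [Finset.mem_filter] at hπ ⊢
    exact ⟨Finset.mem_univ _, pmax_mem_filter π hπ.2⟩
  · intro π hπ π' hπ' heq
    exact pmax_inj _ _ heq
  · intro ρ hρ
    rw [Finset.mem_filter] at hρ
    obtain ⟨-, hav, h0⟩ := hρ
    obtain ⟨π0, hπav, hmap⟩ := pmax_surj ρ hav h0
    exact ⟨π0, Finset.mem_filter.2 ⟨Finset.mem_univ _, hπav⟩, hmap⟩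
  · intro π hπ
    rw [bdes_pmax π]

lemma sum_filter_inst {α : Type*} [Fintype α] (p : α → Prop) (h1 h2 : DecidablePred p)
    (f : α → Polynomial ℤ) :
    ∑ x ∈ @Finset.filter α p h1 Finset.univ, f x
      = ∑ x ∈ @Finset.filter α p h2 Finset.univ, f x := by
  have he : h1 = h2 := funext fun a => Subsingleton.elim (h1 a) (h2 a)
  subst he
  rfl

lemma c_rec (n : ℕ) : c (n+1) = c n + X * (A (n+1) - c n) := by
  rw [c_key n]
  have hsum : (∑ π ∈ Finset.univ.filter (fun π : Equiv.Perm (Fin (n+1)) => Av π),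
      X ^ (bdes π + (if (π 0 : ℕ) = n then 0 else 1)) : Polynomial ℤ)
      = ∑ π ∈ Finset.univ.filter (fun π : Equiv.Perm (Fin (n+1)) => Av π),
        (if (π 0 : ℕ) = n then X ^ bdes π else X * X ^ bdes π) := by
    refine Finset.sum_congr rfl fun π hπ => ?_
    split_ifs with h
    · rw [Nat.add_zero]
    · rw [pow_succ, mul_comm]
  rw [hsum, Finset.sum_ite, ← Finset.mul_sum]
  have hc1 : ∑ π ∈ Finset.filter (fun π => (π 0 : ℕ) = n)
        (Finset.univ.filter (fun π : Equiv.Perm (Fin (n+1)) => Av π)), X ^ bdes π = c n := by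
    unfold c
    rw [Finset.filter_filter]
  have hA : (∑ π ∈ Finset.filter (fun π => (π 0 : ℕ) = n)
        (Finset.univ.filter (fun π : Equiv.Perm (Fin (n+1)) => Av π)), X ^ bdes π)
      + (∑ π ∈ Finset.filter (fun π => ¬ (π 0 : ℕ) = n)
        (Finset.univ.filter (fun π : Equiv.Perm (Fin (n+1)) => Av π)), X ^ bdes π)
      = A (n+1) := by
    unfold A
    exact Finset.sum_filter_add_sum_filter_not _ _ _
  rw [← hc1, ← hA]
  ring

lemma e_key (n : ℕ) : e n
    = ∑ π ∈ Finset.univ.filter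
        (fun π : Equiv.Perm (Fin (n+1)) => Av π ∧ (π 0 : ℕ) = n), X ^ bdes π := by
  unfold e
  refine (Finset.sum_bij (fun (π : Equiv.Perm (Fin (n+1))) (_ : π ∈ _) => pmax π)
    ?_ ?_ ?_ ?_).symm
  · intro π hπ
    rw [Finset.mem_filter] at hπ ⊢
    obtain ⟨-, hav, h0⟩ := hπ
    refine ⟨Finset.mem_univ _, (pmax_mem_filter π hav).1, (pmax_mem_filter π hav).2, ?_⟩
    rw [show (1 : Fin (n+2)) = Fin.succ 0 from (Fin.succ_zero_eq_one).symm, pmax_succ]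
    rw [Fin.coe_castSucc]
    exact h0
  · intro π hπ π' hπ' heq
    exact pmax_inj _ _ heq
  · intro ρ hρ
    rw [Finset.mem_filter] at hρ
    obtain ⟨-, hav, h0, h1⟩ := hρ
    obtain ⟨π0, hπav, hmap⟩ := pmax_surj ρ hav h0
    refine ⟨π0, Finset.mem_filter.2 ⟨Finset.mem_univ _, hπav, ?_⟩, hmap⟩
    have := congrArg (fun (τ : Equiv.Perm (Fin (n+2))) => (τ 1 : ℕ)) hmap
    rw [show (1 : Fin (n+2)) = Fin.succ 0 from (Fin.succ_zero_eq_one).symm, pmax_succ,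
      Fin.coe_castSucc] at this
    rw [this]
    exact h1
  · intro π hπ
    rw [Finset.mem_filter] at hπ
    rw [bdes_pmax π, if_pos hπ.2.2]
    rfl

lemma e_eq (n : ℕ) : e n = c n := by
  rw [e_key]
  unfold c
  exact sum_filter_inst _ _ _ _
lemma delta_eval {n : ℕ} (π : Equiv.Perm (Fin (n+2))) (hav : Av π) :
    (∑ k ∈ Finset.range (n+2),
      (if h : k + 1 < n+2 then
        (if (π ⟨k, Nat.lt_of_succ_lt h⟩ : ℕ) = n+1 ∧ (π ⟨k+1, h⟩ : ℕ) = n then 1 else 0)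
      else 0))
    = if (π 0 : ℕ) = n+1 ∧ (π 1 : ℕ) = n then 1 else 0 := by
  have h01 : ((1 : Fin (n+2)) : ℕ) = 1 := by simp
  by_cases hc : (π 0 : ℕ) = n+1 ∧ (π 1 : ℕ) = n
  · rw [if_pos hc]
    rw [Finset.sum_eq_single_of_mem 0 (Finset.mem_range.2 (by omega))]
    · rw [dif_pos (by omega : 0+1 < n+2), if_pos]
      constructor
      · rw [show (⟨0, by omega⟩ : Fin (n+2)) = 0 from Fin.ext (by simp)]
        exact hc.1
      · rw [show (⟨0+1, by omega⟩ : Fin (n+2)) = 1 from Fin.ext (by simp [h01])]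
        exact hc.2
    · intro k hk hk0
      by_cases h : k+1 < n+2
      · rw [dif_pos h, if_neg]
        rintro ⟨ha, hb⟩
        have hkeq : (⟨k, Nat.lt_of_succ_lt h⟩ : Fin (n+2)) = 0 :=
          π.injective (Fin.ext (by rw [ha, hc.1]))
        exact hk0 (by simpa using congrArg Fin.val hkeq)
      · rw [dif_neg h]
  · rw [if_neg hc]
    refine Finset.sum_eq_zero fun k hk => ?_
    by_cases h : k+1 < n+2
    · rw [dif_pos h, if_neg]
      rintro ⟨ha, hb⟩
      have hge := first_large π hav
      have hltb := (π 0).isLt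
      rcases (by omega : (π 0 : ℕ) = n+1 ∨ (π 0 : ℕ) = n) with h1 | h1
      · have hkeq : (⟨k, Nat.lt_of_succ_lt h⟩ : Fin (n+2)) = 0 :=
          π.injective (Fin.ext (by rw [ha, h1]))
        have hk0 : k = 0 := by simpa using congrArg Fin.val hkeq
        apply hc
        refine ⟨h1, ?_⟩
        have h1k : (1 : Fin (n+2)) = ⟨k+1, h⟩ := Fin.ext (by simp [h01, hk0])
        rw [h1k]
        exact hb
      · have hkeq : (⟨k+1, h⟩ : Fin (n+2)) = 0 :=
          π.injective (Fin.ext (by rw [hb, h1]))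
        have := congrArg Fin.val hkeq
        simp at this
    · rw [dif_neg h]

lemma dmap_inj {n : ℕ} (π π' : Equiv.Perm (Fin (n+2))) (h : dmap π = dmap π') : π = π' := by
  ext j
  have h2 := congrArg (fun (ρ : Equiv.Perm (Fin (n+3))) => ρ j.succ) h
  simp only [dmap_succ] at h2
  exact congrArg Fin.val (vmap_inj h2)

/-- Partial inverse of `vmap`. -/
def pv (n : ℕ) (w : Fin (n+3)) : Fin (n+2) :=
  if h2 : (w : ℕ) = n+2 then Fin.last (n+1) else ⟨(w : ℕ), by omega⟩

lemma vmap_pv {n : ℕ} (w : Fin (n+3)) (hw : (w : ℕ) ≠ n+1) : vmap n (pv n w) = w := by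
  unfold pv vmap
  by_cases h2 : (w : ℕ) = n+2
  · rw [dif_pos h2]
    rw [if_pos (by simp)]
    exact Fin.ext (by simp [h2])
  · rw [dif_neg h2]
    rw [if_neg (by simpa using hw)]
    exact Fin.ext (by simp)

lemma dmap_surj {n : ℕ} (ρ : Equiv.Perm (Fin (n+3))) (hav : Av ρ) (h0 : (ρ 0 : ℕ) = n+1) :
    ∃ π : Equiv.Perm (Fin (n+2)), Av π ∧ dmap π = ρ := by
  have hne : ∀ j : Fin (n+2), (ρ j.succ : ℕ) ≠ n+1 := by
    intro j hh
    have : ρ j.succ = ρ 0 := Fin.ext (by rw [hh, h0])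
    exact (Fin.succ_ne_zero j) (ρ.injective this)
  have hinj : Function.Injective (fun j : Fin (n+2) => pv n (ρ j.succ)) := by
    intro a b hab
    simp only [pv] at hab
    have hna := hne a
    have hnb := hne b
    have hba := (ρ a.succ).isLt
    have hbb := (ρ b.succ).isLt
    have hvv : (ρ a.succ : ℕ) = (ρ b.succ : ℕ) := by
      split_ifs at hab with u1 u2 u2
      · omega
      · have := congrArg Fin.val hab
        simp at this
        omega
      · have := congrArg Fin.val hab
        simp at this
        omega
      · have := congrArg Fin.val hab
        simpa using this
    exact Fin.succ_injective _ (ρ.injective (Fin.ext hvv))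
  set π0 : Equiv.Perm (Fin (n+2)) :=
    Equiv.ofBijective _ (Finite.injective_iff_bijective.1 hinj) with hπ0
  have happ : ∀ j, π0 j = pv n (ρ j.succ) := fun j => rfl
  have hmap : dmap π0 = ρ := by
    refine Equiv.ext fun i => ?_
    induction i using Fin.cases with
    | zero =>
      rw [dmap_zero]
      exact Fin.ext (by rw [h0])
    | succ j =>
      rw [dmap_succ, happ, vmap_pv _ (hne j)]
  exact ⟨π0, (av_dmap_iff π0).1 (hmap ▸ hav), hmap⟩

lemma d_key (n : ℕ) : d (n+1)
    = ∑ π ∈ Finset.univ.filter (fun π : Equiv.Perm (Fin (n+2)) => Av π),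
        X ^ (bdes π + (if (π 0 : ℕ) = n+1 ∧ (π 1 : ℕ) = n then 1 else 0)) := by
  unfold d
  refine (Finset.sum_bij (fun (π : Equiv.Perm (Fin (n+2))) (_ : π ∈ _) => dmap π)
    ?_ ?_ ?_ ?_).symm
  · intro π hπ
    rw [Finset.mem_filter] at hπ ⊢
    refine ⟨Finset.mem_univ _, (av_dmap_iff π).2 hπ.2, ?_⟩
    rw [dmap_zero]
  · intro π hπ π' hπ' heq
    exact dmap_inj _ _ heq
  · intro ρ hρ
    rw [Finset.mem_filter] at hρ
    obtain ⟨-, hav, h0⟩ := hρ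
    obtain ⟨π0, hπav, hmap⟩ := dmap_surj ρ hav h0
    exact ⟨π0, Finset.mem_filter.2 ⟨Finset.mem_univ _, hπav⟩, hmap⟩
  · intro π hπ
    rw [Finset.mem_filter] at hπ
    rw [bdes_dmap π (first_large π hπ.2), delta_eval π hπ.2]

lemma d_rec (n : ℕ) : d (n+1) = A (n+2) + (X - 1) * e n := by
  rw [d_key n]
  have hsum : (∑ π ∈ Finset.univ.filter (fun π : Equiv.Perm (Fin (n+2)) => Av π),
      X ^ (bdes π + (if (π 0 : ℕ) = n+1 ∧ (π 1 : ℕ) = n then 1 else 0)) : Polynomial ℤ)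
      = ∑ π ∈ Finset.univ.filter (fun π : Equiv.Perm (Fin (n+2)) => Av π),
        (if (π 0 : ℕ) = n+1 ∧ (π 1 : ℕ) = n then X * X ^ bdes π else X ^ bdes π) := by
    refine Finset.sum_congr rfl fun π hπ => ?_
    split_ifs with h
    · rw [pow_succ, mul_comm]
    · rfl
  rw [hsum, Finset.sum_ite, ← Finset.mul_sum]
  have hc1 : ∑ π ∈ Finset.filter (fun π => (π 0 : ℕ) = n+1 ∧ (π 1 : ℕ) = n)
        (Finset.univ.filter (fun π : Equiv.Perm (Fin (n+2)) => Av π)), X ^ bdes π = e n := by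
    unfold e
    rw [Finset.filter_filter]
  have hA : (∑ π ∈ Finset.filter (fun π => (π 0 : ℕ) = n+1 ∧ (π 1 : ℕ) = n)
        (Finset.univ.filter (fun π : Equiv.Perm (Fin (n+2)) => Av π)), X ^ bdes π)
      + (∑ π ∈ Finset.filter (fun π => ¬ ((π 0 : ℕ) = n+1 ∧ (π 1 : ℕ) = n))
        (Finset.univ.filter (fun π : Equiv.Perm (Fin (n+2)) => Av π)), X ^ bdes π)
      = A (n+2) := by
    unfold A
    exact Finset.sum_filter_add_sum_filter_not _ _ _
  rw [← hc1]
  have hA2 : (∑ π ∈ Finset.filter (fun π => ¬ ((π 0 : ℕ) = n+1 ∧ (π 1 : ℕ) = n))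
        (Finset.univ.filter (fun π : Equiv.Perm (Fin (n+2)) => Av π)), X ^ bdes π)
      = A (n+2) - (∑ π ∈ Finset.filter (fun π => (π 0 : ℕ) = n+1 ∧ (π 1 : ℕ) = n)
        (Finset.univ.filter (fun π : Equiv.Perm (Fin (n+2)) => Av π)), X ^ bdes π) := by
    rw [← hA]; ring
  rw [hA2]
  ring
lemma A3 : A 3 = 2 + 2 * X := by
  have h1 : A 3 = c 2 + d 1 := A_eq 1
  have h2 : c 2 = c 1 + X * (A 2 - c 1) := c_rec 1
  have h3 : c 1 = c 0 + X * (A 1 - c 0) := c_rec 0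
  have h4 : d 1 = A 2 + (X - 1) * e 0 := d_rec 0
  rw [h1, h2, h4, e_eq 0, h3, A1, A2, c0]; ring

/-- The three-term recurrence. -/
lemma A_recurrence (n : ℕ) :
    A (n+4) = 2 * A (n+3) + (X - 1) * A (n+2) + X * (X - 1) * A (n+1) := by
  have h1 : A (n+4) = c (n+3) + d (n+2) := A_eq (n+2)
  have h2 : c (n+3) = c (n+2) + X * (A (n+3) - c (n+2)) := c_rec (n+2)
  have h2' : c (n+2) = c (n+1) + X * (A (n+2) - c (n+1)) := c_rec (n+1)
  have h3 : c (n+1) = c n + X * (A (n+1) - c n) := c_rec n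
  have h5 : d (n+2) = A (n+3) + (X - 1) * c (n+1) := by
    have := d_rec (n+1); rwa [e_eq (n+1)] at this
  have h6 : d (n+1) = A (n+2) + (X - 1) * c n := by
    have := d_rec n; rwa [e_eq n] at this
  have h9 : A (n+3) = c (n+2) + d (n+1) := A_eq (n+1)
  rw [h1, h2, h5, h9, h2', h6, h3]; ring


end Bd

theorem genfun_avoids123_132 :
    letI X : PowerSeries (Polynomial ℤ) := PowerSeries.X
    letI T : PowerSeries (Polynomial ℤ) := PowerSeries.C (R := Polynomial ℤ) Polynomial.X
    (1 - 2 * X + (1 - T) * X ^ 2 + T * (1 - T) * X ^ 3) * B123132 =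
      1 - X + (1 - T) * X ^ 2 - (1 - T) ^ 2 * X ^ 3 := by
  have hB : B123132 = PowerSeries.mk Bd.A := by
    refine PowerSeries.ext fun n => ?_
    simp only [B123132, Bd.A, PowerSeries.coeff_mk]
    refine Finset.sum_congr ?_ fun _ _ => rfl
    apply Finset.filter_congr
    intro x _
    simp only [Bd.Av]
  show (1 - 2 * PowerSeries.X
      + (1 - PowerSeries.C (R := Polynomial ℤ) Polynomial.X) * PowerSeries.X ^ 2
      + PowerSeries.C (R := Polynomial ℤ) Polynomial.X
        * (1 - PowerSeries.C (R := Polynomial ℤ) Polynomial.X) * PowerSeries.X ^ 3) * B123132 = _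
  have hsplit : (1 - 2 * PowerSeries.X
      + (1 - PowerSeries.C (R := Polynomial ℤ) Polynomial.X) * PowerSeries.X ^ 2
      + PowerSeries.C (R := Polynomial ℤ) Polynomial.X
        * (1 - PowerSeries.C (R := Polynomial ℤ) Polynomial.X) * PowerSeries.X ^ 3) * B123132
      = B123132 - PowerSeries.C (R := Polynomial ℤ) 2 * (B123132 * PowerSeries.X ^ 1)
        + B123132 * PowerSeries.X ^ 2
        - PowerSeries.C (R := Polynomial ℤ) Polynomial.X * (B123132 * PowerSeries.X ^ 2)
        + PowerSeries.C (R := Polynomial ℤ) Polynomial.X * (B123132 * PowerSeries.X ^ 3)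
        - PowerSeries.C (R := Polynomial ℤ) Polynomial.X
            * (PowerSeries.C (R := Polynomial ℤ) Polynomial.X * (B123132 * PowerSeries.X ^ 3)) := by
    rw [map_ofNat]; ring
  have hrhs : (1 : PowerSeries (Polynomial ℤ)) - PowerSeries.X
      + (1 - PowerSeries.C (R := Polynomial ℤ) Polynomial.X) * PowerSeries.X ^ 2
      - (1 - PowerSeries.C (R := Polynomial ℤ) Polynomial.X) ^ 2 * PowerSeries.X ^ 3
      = 1 - PowerSeries.X + PowerSeries.X ^ 2
        - PowerSeries.C (R := Polynomial ℤ) Polynomial.X * PowerSeries.X ^ 2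
        - PowerSeries.X ^ 3
        + PowerSeries.C (R := Polynomial ℤ) 2 * (PowerSeries.C (R := Polynomial ℤ) Polynomial.X * PowerSeries.X ^ 3)
        - PowerSeries.C (R := Polynomial ℤ) Polynomial.X
            * (PowerSeries.C (R := Polynomial ℤ) Polynomial.X * PowerSeries.X ^ 3) := by
    rw [map_ofNat]; ring
  rw [hsplit, hrhs]
  refine PowerSeries.ext fun n => ?_
  simp only [map_sub, map_add, PowerSeries.coeff_C_mul, PowerSeries.coeff_mul_X_pow',
    PowerSeries.coeff_X, PowerSeries.coeff_X_pow, PowerSeries.coeff_one, PowerSeries.coeff_C,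
    hB, PowerSeries.coeff_mk]
  rcases n with _ | _ | _ | _ | n
  · norm_num [Bd.A0]
  · norm_num [Bd.A0, Bd.A1]
  · norm_num [Bd.A0, Bd.A1, Bd.A2]
  · norm_num [Bd.A0, Bd.A1, Bd.A2, Bd.A3]; ring
  · have h1 : n + 4 - 1 = n + 3 := by omega
    have h2 : n + 4 - 2 = n + 2 := by omega
    have h3 : n + 4 - 3 = n + 1 := by omega
    have h4 : ¬ (n + 4 = 1) := by omega
    have h5 : ¬ (n + 4 = 2) := by omega
    have h6 : ¬ (n + 4 = 3) := by omega
    have h7 : ¬ (n + 4 = 0) := by omega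
    simp only [show (n:ℕ)+1+1+1+1 = n+4 from rfl, h1, h2, h3, if_neg h4, if_neg h5, if_neg h6,
      if_neg h7, if_pos (by omega : 1 ≤ n+4), if_pos (by omega : 2 ≤ n+4),
      if_pos (by omega : 3 ≤ n+4), if_neg (by omega : ¬ ((n:ℕ)+1 = 0)),
      if_neg (by omega : ¬ ((n:ℕ)+2 = 0)), if_neg (by omega : ¬ ((n:ℕ)+3 = 0)),
      Polynomial.coeff_one]
    linear_combination Bd.A_recurrence n
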